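/- For the warp factor A(z) = (2/(d-1)) log(1 - Λ^d z^d) + log(L/z), the potential V = -(d-1)e^{-2A}(A'' + (d-1)A'²) equals -(d/L²)(1 - Λ^d z^d)^{-2(d+1)/(d-1)} (d-1 + (d+1) Λ^{2d} z^{2d}). -/

import Mathlib

/-- Toy confinement model: for the warp factor
`A(z) = (2/(d-1)) log(1 - Λ^d z^d) + log(L/z)` on `0 < z < Λ⁻¹`, the potential
`V = -(d-1)e^{-2A}(A'' + (d-1)A'²)` equals
`-(d/L²)(1 - Λ^d z^d)^{-2(d+1)/(d-1)} (d-1 + (d+1) Λ^{2d} z^{2d})`. -/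
theorem toy_confinement_potential (d : ℕ) (hd : 2 ≤ d) (L Λ : ℝ)
    (hL : 0 < L) (hΛ : 0 < Λ) (A : ℝ → ℝ)
    (hA : ∀ z ∈ Set.Ioo (0:ℝ) Λ⁻¹,
      A z = 2 / ((d : ℝ) - 1) * Real.log (1 - Λ ^ d * z ^ d) + Real.log (L / z)) :
    ∀ z ∈ Set.Ioo (0:ℝ) Λ⁻¹,
      -((d : ℝ) - 1) * Real.exp (-(2 * A z)) *
          (deriv (deriv A) z + ((d : ℝ) - 1) * (deriv A z) ^ 2) =
        -((d : ℝ) / L ^ 2) *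
          (1 - Λ ^ d * z ^ d) ^ (-(2 * ((d : ℝ) + 1) / ((d : ℝ) - 1))) *
          ((d : ℝ) - 1 + ((d : ℝ) + 1) * Λ ^ (2 * d) * z ^ (2 * d)) := by
  have hd1 : 1 ≤ d := le_trans one_le_two hd
  intro z hz
  obtain ⟨hz0, hzΛ⟩ := hz
  have hD2 : (2:ℝ) ≤ (d:ℝ) := by exact_mod_cast hd
  have hDm : ((d:ℝ) - 1) ≠ 0 := by linarith
  have hzne : z ≠ 0 := ne_of_gt hz0
  have hu : ∀ w ∈ Set.Ioo (0:ℝ) Λ⁻¹, 0 < 1 - Λ ^ d * w ^ d := by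
    intro w hw
    have h1 : Λ * w < 1 := by
      calc Λ * w < Λ * Λ⁻¹ := by exact mul_lt_mul_of_pos_left hw.2 hΛ
      _ = 1 := mul_inv_cancel₀ (ne_of_gt hΛ)
    have h2 : (Λ * w)^d < 1 := pow_lt_one₀ (mul_nonneg hΛ.le hw.1.le) h1 (by omega)
    rw [mul_pow] at h2
    linarith
  have huz := hu z ⟨hz0, hzΛ⟩
  set c : ℝ := 2 / ((d:ℝ) - 1) with hc
  set g : ℝ → ℝ := fun w => c * Real.log (1 - Λ ^ d * w ^ d) + (Real.log L - Real.log w) with hg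
  have hAg : ∀ w ∈ Set.Ioo (0:ℝ) Λ⁻¹, A w = g w := by
    intro w hw
    rw [hA w hw, hg]
    rw [Real.log_div (ne_of_gt hL) (ne_of_gt hw.1)]
  set g1 : ℝ → ℝ := fun w =>
    c * (-(Λ^d * ((d:ℝ) * w^(d-1))) / (1 - Λ^d * w^d)) - w⁻¹ with hg1def
  have hder : ∀ w ∈ Set.Ioo (0:ℝ) Λ⁻¹, HasDerivAt g (g1 w) w := by
    intro w hw
    have huw := hu w hw
    have h1 : HasDerivAt (fun w : ℝ => 1 - Λ ^ d * w ^ d) (-(Λ^d * ((d:ℝ) * w^(d-1)))) w := by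
      simpa using ((hasDerivAt_pow d w).const_mul (Λ^d)).const_sub 1
    have h2 := (h1.log (ne_of_gt huw)).const_mul c
    have h3 := ((hasDerivAt_const w (Real.log L)).sub (Real.hasDerivAt_log (ne_of_gt hw.1)))
    have h4 := h2.add h3
    simpa [hg1def, hg, sub_eq_add_neg, Pi.add_def, Pi.neg_def] using h4
  have hAd : ∀ w ∈ Set.Ioo (0:ℝ) Λ⁻¹, deriv A w = g1 w := by
    intro w hw
    have hmem : Set.Ioo (0:ℝ) Λ⁻¹ ∈ nhds w := isOpen_Ioo.mem_nhds hw
    have hEq : A =ᶠ[nhds w] g := Filter.eventuallyEq_of_mem hmem hAg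
    rw [hEq.deriv_eq, (hder w hw).deriv]
  -- second derivative of A at z
  have hg1z : HasDerivAt g1
      (c * ((-(Λ^d * ((d:ℝ) * (((d:ℝ)-1) * z^(d-2)))) * (1 - Λ^d * z^d)
          - -(Λ^d * ((d:ℝ) * z^(d-1))) * -(Λ^d * ((d:ℝ) * z^(d-1)))) / (1 - Λ^d * z^d)^2)
        + (z^2)⁻¹) z := by
    have h1 : HasDerivAt (fun w : ℝ => 1 - Λ ^ d * w ^ d) (-(Λ^d * ((d:ℝ) * z^(d-1)))) z := by
      simpa using ((hasDerivAt_pow d z).const_mul (Λ^d)).const_sub 1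
    have hn : HasDerivAt (fun w : ℝ => -(Λ^d * ((d:ℝ) * w^(d-1))))
        (-(Λ^d * ((d:ℝ) * (((d:ℝ)-1) * z^(d-2))))) z := by
      have h5 := (((hasDerivAt_pow (d-1) z).const_mul ((d:ℝ))).const_mul (Λ^d)).neg
      have e1 : ((d-1:ℕ):ℝ) = (d:ℝ) - 1 := by
        push_cast [Nat.cast_sub hd1]; ring
      have e2 : d - 1 - 1 = d - 2 := by omega
      rw [e1, e2] at h5
      exact h5
    have hq := hn.div h1 (ne_of_gt huz)
    have hinv := hasDerivAt_inv hzne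
    have h6 := (hq.const_mul c).sub hinv
    have h7 : ∀ w : ℝ, c * (-(Λ^d * ((d:ℝ) * w^(d-1))) / (1 - Λ^d * w^d)) - w⁻¹
        = g1 w := fun w => rfl
    simpa [hg1def, sub_neg_eq_add, Pi.sub_def] using h6
  have hdd : deriv (deriv A) z
      = c * ((-(Λ^d * ((d:ℝ) * (((d:ℝ)-1) * z^(d-2)))) * (1 - Λ^d * z^d)
          - -(Λ^d * ((d:ℝ) * z^(d-1))) * -(Λ^d * ((d:ℝ) * z^(d-1)))) / (1 - Λ^d * z^d)^2)
        + (z^2)⁻¹ := by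
    have hmem : Set.Ioo (0:ℝ) Λ⁻¹ ∈ nhds z := isOpen_Ioo.mem_nhds ⟨hz0, hzΛ⟩
    have hEq : deriv A =ᶠ[nhds z] g1 := Filter.eventuallyEq_of_mem hmem hAd
    rw [hEq.deriv_eq, hg1z.deriv]
  have hd1' : deriv A z = c * (-(Λ^d * ((d:ℝ) * z^(d-1))) / (1 - Λ^d * z^d)) - z⁻¹ :=
    hAd z ⟨hz0, hzΛ⟩
  -- exponential factor
  have hexp : Real.exp (-(2 * A z))
      = Real.exp (Real.log (1 - Λ^d * z^d) * (-2 * c)) * (z^2 / L^2) := by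
    rw [hAg z ⟨hz0, hzΛ⟩, hg]
    have : -(2 * (c * Real.log (1 - Λ ^ d * z ^ d) + (Real.log L - Real.log z)))
        = Real.log (1 - Λ^d * z^d) * (-2 * c) + (Real.log (z^2) - Real.log (L^2)) := by
      rw [Real.log_pow, Real.log_pow]; push_cast; ring
    rw [this, Real.exp_add, Real.exp_sub, Real.exp_log (by positivity),
      Real.exp_log (by positivity)]
  -- rpow factor
  have hrpow : (1 - Λ^d * z^d) ^ (-(2 * ((d:ℝ) + 1) / ((d:ℝ) - 1)))
      = Real.exp (Real.log (1 - Λ^d * z^d) * (-2 * c)) * ((1 - Λ^d * z^d)^2)⁻¹ := by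
    rw [Real.rpow_def_of_pos huz]
    have : Real.log (1 - Λ^d * z^d) * (-(2 * ((d:ℝ) + 1) / ((d:ℝ) - 1)))
        = Real.log (1 - Λ^d * z^d) * (-2 * c) + Real.log (1 - Λ^d * z^d) * (-2) := by
      rw [hc]; field_simp; ring
    rw [this, Real.exp_add]
    congr 1
    rw [show Real.log (1 - Λ^d * z^d) * (-2:ℝ)
        = -(Real.log (1 - Λ^d * z^d) + Real.log (1 - Λ^d * z^d)) from by ring,
      Real.exp_neg, Real.exp_add, Real.exp_log huz]
    ring
  rw [hd1', hdd, hexp, hrpow]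
  -- power bookkeeping
  have e1 : z^(d-1) = z^d / z := by
    rw [eq_div_iff hzne, ← pow_succ]; congr 1; omega
  have e2 : z^(d-2) = z^d / z^2 := by
    rw [eq_div_iff (pow_ne_zero 2 hzne), ← pow_add]; congr 1; omega
  have e3 : z^(2*d) = (z^d)^2 := by rw [mul_comm, pow_mul]
  have e4 : Λ^(2*d) = (Λ^d)^2 := by rw [mul_comm, pow_mul]
  rw [e1, e2, e3, e4, hc]
  have hune : (1 - Λ^d * z^d) ≠ 0 := ne_of_gt huz
  have hLne : L ≠ 0 := ne_of_gt hL
  field_simp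
  ring
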